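/- (Weak law of large numbers.) Let A be a commutative unital C*-algebra, ω a state on A, and x₁, x₂, … a sequence of self-adjoint elements of A that are ω-independent, meaning that for distinct indices i₁ < i₂ < … < i_m and positive integers k₁, …, k_m one has ω(x_{i₁}^{k₁} x_{i₂}^{k₂} ⋯ x_{i_m}^{k_m}) = ω(x_{i₁}^{k₁})·ω(x_{i₂}^{k₂})⋯ω(x_{i_m}^{k_m}), and identically distributed, meaning ω(xᵢ^k) = ω(x₁^k) for all i and all positive integers k. Let μ = ω(x₁) and sₙ = (x₁ + ⋯ + xₙ)/n. Then for every positive integer k, ω(|sₙ − μ·1|^k) → 0 as n → ∞. -/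

import Mathlib

open scoped ComplexOrder
open Finset Filter

private lemma wlln_prod_fin {α M : Type*} [LinearOrder α] [CommMonoid M]
    (t : Finset α) (f : α → M) :
    ∏ i ∈ t, f i = ∏ j : Fin t.card, f (t.orderEmbOfFin rfl j) := by
  refine (Finset.prod_bij (fun j _ => t.orderEmbOfFin rfl j) ?_ ?_ ?_ ?_).symm
  · intro j _; exact t.orderEmbOfFin_mem rfl j
  · intro a _ b _ h; exact (t.orderEmbOfFin rfl).injective h
  · intro b hb
    have : b ∈ Set.range (t.orderEmbOfFin rfl) := by
      rw [Finset.range_orderEmbOfFin]; exact hb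
    obtain ⟨j, rfl⟩ := this
    exact ⟨j, mem_univ _, rfl⟩
  · intro j _; rfl

private lemma wlln_smul_prod {A : Type*} [CommRing A] [Algebra ℂ A] {ι : Type*} [Fintype ι]
    (z : ι → ℂ) (v : ι → A) :
    ∏ j, z j • v j = (∏ j, z j) • ∏ j, v j := by
  simp only [Algebra.smul_def, map_prod]
  rw [← prod_mul_distrib]

private lemma wlln_binom {A : Type*} [CommRing A] [Algebra ℂ A] (a : A) (μ : ℂ) (m : ℕ) :
    (a - μ • 1) ^ m
      = ∑ c ∈ range (m + 1), ((m.choose c : ℂ) * (-μ) ^ (m - c)) • a ^ c := by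
  have h : a - μ • 1 = a + algebraMap ℂ A (-μ) := by
    rw [Algebra.algebraMap_eq_smul_one, neg_smul, sub_eq_add_neg]
  rw [h, add_pow]
  refine Finset.sum_congr rfl fun c _ => ?_
  rw [Algebra.smul_def, map_mul, ← map_pow, map_natCast]
  ring

section indep

variable {A : Type*} [CommRing A] [Algebra ℂ A] (ω : A →ₗ[ℂ] ℂ) (hω1 : ω 1 = 1)
  (x : ℕ → A)
  (hindep : ∀ (m : ℕ) (idx : Fin m → ℕ), StrictMono idx →
      ∀ k : Fin m → ℕ, (∀ j, 0 < k j) →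
        ω (∏ j, x (idx j) ^ k j) = ∏ j, ω (x (idx j) ^ k j))

include hω1 hindep

private lemma wlln_indep' (m : ℕ) (idx : Fin m → ℕ) (hmono : StrictMono idx)
    (K : Fin m → ℕ) :
    ω (∏ j, x (idx j) ^ K j) = ∏ j, ω (x (idx j) ^ K j) := by
  classical
  set s : Finset (Fin m) := univ.filter (fun j => K j ≠ 0) with hs
  have h1 : ∏ j, x (idx j) ^ K j = ∏ j ∈ s, x (idx j) ^ K j := by
    symm; apply prod_subset (subset_univ s)
    intro j _ hj
    have hj0 : K j = 0 := by simpa [hs] using hj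
    simp [hj0]
  have h2 : ∏ j, ω (x (idx j) ^ K j) = ∏ j ∈ s, ω (x (idx j) ^ K j) := by
    symm; apply prod_subset (subset_univ s)
    intro j _ hj
    have hj0 : K j = 0 := by simpa [hs] using hj
    simp [hj0, hω1]
  rw [h1, h2, wlln_prod_fin s (fun j => x (idx j) ^ K j),
    wlln_prod_fin s (fun j => ω (x (idx j) ^ K j))]
  exact hindep s.card (fun i => idx (s.orderEmbOfFin rfl i))
    (hmono.comp (s.orderEmbOfFin rfl).strictMono)
    (fun i => K (s.orderEmbOfFin rfl i))
    (fun i => Nat.pos_of_ne_zero (by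
      have h := s.orderEmbOfFin_mem rfl i
      exact (Finset.mem_filter.mp h).2))

private lemma wlln_indep_y (μ : ℂ) (m : ℕ) (idx : Fin m → ℕ) (hmono : StrictMono idx)
    (K : Fin m → ℕ) :
    ω (∏ j, (x (idx j) - μ • 1) ^ K j) = ∏ j, ω ((x (idx j) - μ • 1) ^ K j) := by
  classical
  have hexp : ∏ j, (x (idx j) - μ • 1) ^ K j
      = ∑ g ∈ Fintype.piFinset (fun j => range (K j + 1)),
          (∏ j, (((K j).choose (g j) : ℂ) * (-μ) ^ (K j - g j))) •
            ∏ j, x (idx j) ^ g j := by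
    simp_rw [wlln_binom]
    rw [prod_univ_sum]
    exact Finset.sum_congr rfl fun g _ => wlln_smul_prod _ _
  rw [hexp, map_sum]
  have hterm : ∀ g ∈ Fintype.piFinset (fun j => range (K j + 1)),
      ω ((∏ j, (((K j).choose (g j) : ℂ) * (-μ) ^ (K j - g j))) • ∏ j, x (idx j) ^ g j)
        = (∏ j, (((K j).choose (g j) : ℂ) * (-μ) ^ (K j - g j))) *
            ∏ j, ω (x (idx j) ^ g j) := by
    intro g _
    rw [map_smul, smul_eq_mul, wlln_indep' ω hω1 x hindep m idx hmono (fun j => g j)]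
  rw [Finset.sum_congr rfl hterm]
  have hrhs : ∀ j : Fin m, ω ((x (idx j) - μ • 1) ^ K j)
      = ∑ c ∈ range (K j + 1), (((K j).choose c : ℂ) * (-μ) ^ (K j - c)) *
          ω (x (idx j) ^ c) := by
    intro j
    rw [wlln_binom, map_sum]
    exact Finset.sum_congr rfl fun c _ => by rw [map_smul, smul_eq_mul]
  simp_rw [hrhs]
  rw [prod_univ_sum]
  exact Finset.sum_congr rfl fun g _ => (prod_mul_distrib).symm

private lemma wlln_indep_y_set (μ : ℂ) (t : Finset ℕ) (K : ℕ → ℕ) :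
    ω (∏ i ∈ t, (x i - μ • 1) ^ K i) = ∏ i ∈ t, ω ((x i - μ • 1) ^ K i) := by
  rw [wlln_prod_fin t (fun i => (x i - μ • 1) ^ K i),
    wlln_prod_fin t (fun i => ω ((x i - μ • 1) ^ K i))]
  exact wlln_indep_y ω hω1 x hindep μ t.card (t.orderEmbOfFin rfl)
    (t.orderEmbOfFin rfl).strictMono (fun j => K (t.orderEmbOfFin rfl j))

end indep

section cstar

variable {A : Type*} [CommCStarAlgebra A] [PartialOrder A] [StarOrderedRing A]
  (ω : A →ₗ[ℂ] ℂ) (hω1 : ω 1 = 1) (hωpos : ∀ a : A, 0 ≤ a → 0 ≤ ω a)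

include hωpos in
private lemma wlln_real_nonneg {a : A} (ha : 0 ≤ a) :
    ω a = ((ω a).re : ℂ) ∧ 0 ≤ (ω a).re := by
  have h := hωpos a ha
  rw [Complex.le_def] at h
  refine ⟨Complex.ext rfl ?_, by simpa using h.1⟩
  simpa using h.2.symm

include hωpos in
private lemma wlln_im_sa {a : A} (ha : IsSelfAdjoint a) : ω a = ((ω a).re : ℂ) := by
  have hd : a = a⁺ - a⁻ := (CFC.posPart_sub_negPart a ha).symm
  have h1 := wlln_real_nonneg ω hωpos (CFC.posPart_nonneg a)
  have h2 := wlln_real_nonneg ω hωpos (CFC.negPart_nonneg a)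
  have hsub : ω a = ω a⁺ - ω a⁻ := by
    conv_lhs => rw [hd]
    rw [map_sub]
  rw [hsub, h1.1, h2.1]
  simp [Complex.ext_iff]

include hω1 hωpos in
private lemma wlln_cs {b : A} (hb : 0 ≤ b) : ‖ω b‖ ^ 2 ≤ ‖ω (b ^ 2)‖ := by
  obtain ⟨hre, hrpos⟩ := wlln_real_nonneg ω hωpos hb
  set r : ℝ := (ω b).re with hr
  have hbsa : IsSelfAdjoint b := .of_nonneg hb
  set c : A := b - (r : ℂ) • 1 with hc
  have hcsa : IsSelfAdjoint c := by
    rw [IsSelfAdjoint, hc, star_sub, hbsa.star_eq, star_smul, star_one]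
    simp [Complex.conj_ofReal]
  have hc2 : (0 : A) ≤ c ^ 2 := by
    calc (0 : A) ≤ star c * c := star_mul_self_nonneg c
    _ = c ^ 2 := by rw [hcsa.star_eq, sq]
  have hexp : c ^ 2 = b ^ 2 - ((2 * r : ℂ)) • b + (((r : ℂ) ^ 2)) • 1 := by
    rw [hc]
    simp only [Algebra.smul_def, map_mul, map_pow, map_ofNat]
    ring
  have h0 := hωpos _ hc2
  rw [hexp, map_add, map_sub, map_smul, map_smul, hω1, smul_eq_mul, smul_eq_mul,
    mul_one, hre] at h0
  obtain ⟨hb2, hb2pos⟩ := wlln_real_nonneg ω hωpos (CStarAlgebra.pow_nonneg hb 2)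
  have h0' : (0 : ℂ) ≤ (((ω (b ^ 2)).re - r ^ 2 : ℝ) : ℂ) := by
    rw [hb2] at h0
    convert h0 using 1
    push_cast
    ring
  rw [Complex.zero_le_real] at h0'
  have hkey : r ^ 2 ≤ (ω (b ^ 2)).re := by linarith
  have hn1 : ‖ω b‖ = r := by
    rw [hre, Complex.norm_real, Real.norm_eq_abs, abs_of_nonneg hrpos]
  have hn2 : ‖ω (b ^ 2)‖ = (ω (b ^ 2)).re := by
    rw [hb2, Complex.norm_real, Real.norm_eq_abs, abs_of_nonneg hb2pos]
    simp
  rw [hn1, hn2]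
  exact hkey

include hω1 hωpos in
private lemma wlln_sqrt_bound {a : A} (ha : IsSelfAdjoint a) (k : ℕ) :
    ‖ω (CFC.sqrt (a ^ 2) ^ k)‖ ≤ Real.sqrt ‖ω (a ^ (2 * k))‖ := by
  have ha2 : (0 : A) ≤ a ^ 2 := by
    calc (0 : A) ≤ star a * a := star_mul_self_nonneg a
    _ = a ^ 2 := by rw [ha.star_eq, sq]
  have hbpos : (0 : A) ≤ CFC.sqrt (a ^ 2) ^ k :=
    CStarAlgebra.pow_nonneg (CFC.sqrt_nonneg _) k
  have hb2 : (CFC.sqrt (a ^ 2) ^ k) ^ 2 = a ^ (2 * k) := by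
    rw [← pow_mul, mul_comm k 2, pow_mul, CFC.sq_sqrt _ ha2, ← pow_mul]
  have := wlln_cs ω hω1 hωpos hbpos
  rw [hb2] at this
  have h2 := Real.sqrt_le_sqrt this
  rwa [Real.sqrt_sq (norm_nonneg _)] at h2

end cstar

set_option maxHeartbeats 1000000 in
/-- **Weak law of large numbers (algebraic form).**
Let `ω` be a state on a commutative unital C*-algebra `A` and `x : ℕ → A` a
sequence of self-adjoint elements that are `ω`-independent (expectations of
products of powers over distinct indices factor) and identically distributed
(`ω (x i ^ k) = ω (x 0 ^ k)` for all `i, k`).  With `μ = ω (x 0)` and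
`sₙ = (x 0 + ⋯ + x (n-1)) / n`, for every `k > 0` one has
`ω (|sₙ - μ•1|^k) → 0` as `n → ∞`, where `|a| = (a²)^{1/2}`. -/
theorem weak_law_of_large_numbers (A : Type*) [CommCStarAlgebra A]
    [PartialOrder A] [StarOrderedRing A]
    (ω : A →ₗ[ℂ] ℂ) (hω1 : ω 1 = 1) (hωpos : ∀ a : A, 0 ≤ a → 0 ≤ ω a)
    (x : ℕ → A) (hsa : ∀ i, IsSelfAdjoint (x i))
    (hindep : ∀ (m : ℕ) (idx : Fin m → ℕ), StrictMono idx →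
      ∀ k : Fin m → ℕ, (∀ j, 0 < k j) →
        ω (∏ j, x (idx j) ^ k j) = ∏ j, ω (x (idx j) ^ k j))
    (hid : ∀ i, ∀ k : ℕ, 0 < k → ω (x i ^ k) = ω (x 0 ^ k))
    (k : ℕ) (hk : 0 < k) :
    Filter.Tendsto
      (fun n : ℕ =>
        ω (CFC.sqrt ((((n : ℂ)⁻¹ • ∑ i ∈ Finset.range n, x i) - ω (x 0) • 1) ^ 2) ^ k))
      Filter.atTop (nhds 0) := by

  set μ : ℂ := ω (x 0) with hμ
  set y : ℕ → A := fun i => x i - μ • 1 with hy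
  set N := 2 * k with hN
  set a : ℕ → A := fun n => ((n : ℂ)⁻¹ • ∑ i ∈ Finset.range n, x i) - μ • 1 with ha
  -- μ is real
  have hμre : (starRingEnd ℂ) μ = μ := by
    rw [hμ, wlln_im_sa ω hωpos (hsa 0), Complex.conj_ofReal]
  -- a n is self-adjoint
  have hasa : ∀ n, IsSelfAdjoint (a n) := by
    intro n
    rw [IsSelfAdjoint, ha]
    simp only [star_sub, star_smul, star_one, star_sum, Complex.star_def, map_inv₀,
      map_natCast, hμre]
    congr 1
    congr 1
    exact Finset.sum_congr rfl fun i _ => (hsa i).star_eq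
  -- representation of a n via y
  have harepr : ∀ n : ℕ, 1 ≤ n → a n = (n : ℂ)⁻¹ • ∑ i ∈ range n, y i := by
    intro n hn
    have hne : (n : ℂ) ≠ 0 := Nat.cast_ne_zero.mpr (by omega)
    rw [ha, hy]
    simp only
    rw [Finset.sum_sub_distrib, smul_sub, Finset.sum_const, Finset.card_range]
    congr 1
    rw [← Nat.cast_smul_eq_nsmul ℂ n, smul_smul, inv_mul_cancel₀ hne, one_smul]
  -- identical distribution for y
  have hidy : ∀ (i m : ℕ), ω (y i ^ m) = ω (y 0 ^ m) := by
    intro i m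
    simp only [hy]
    rw [wlln_binom, wlln_binom, map_sum, map_sum]
    refine Finset.sum_congr rfl fun c _ => ?_
    rw [map_smul, map_smul]
    rcases Nat.eq_zero_or_pos c with h0 | hpos
    · simp [h0]
    · rw [hid i c hpos]
  have hy1 : ω (y 0) = 0 := by
    simp only [hy]
    rw [map_sub, map_smul, hω1, smul_eq_mul, mul_one, hμ, sub_self]
  have hyset : ∀ (t : Finset ℕ) (K : ℕ → ℕ),
      ω (∏ i ∈ t, y i ^ K i) = ∏ i ∈ t, ω (y i ^ K i) := by
    intro t K
    simp only [hy]
    exact wlln_indep_y_set ω hω1 x hindep μ t K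
  set B : ℝ := 1 + ∑ m ∈ range (N + 1), ‖ω (y 0 ^ m)‖ with hB
  have hB1 : (1 : ℝ) ≤ B :=
    le_add_of_nonneg_right (Finset.sum_nonneg fun _ _ => norm_nonneg _)
  -- the key moment bound
  have hmain : ∀ n : ℕ, 1 ≤ n →
      ‖ω (a n ^ N)‖ ≤ ((k : ℝ) ^ N * B ^ N) * ((n : ℝ)⁻¹) ^ k := by
    intro n hn
    have hnR : (1 : ℝ) ≤ (n : ℝ) := by exact_mod_cast hn
    have hnR0 : (0 : ℝ) < (n : ℝ) := by linarith
    set P := Fintype.piFinset (fun _ : Fin N => range n) with hP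
    set T : (Fin N → ℕ) → ℂ := fun g => ω (∏ j, y (g j)) with hT
    set mult : (Fin N → ℕ) → ℕ → ℕ :=
      fun g i => ((univ : Finset (Fin N)).filter (fun j => g j = i)).card with hmult
    have hrepr : ω (a n ^ N) = ((n : ℂ)⁻¹) ^ N * ∑ g ∈ P, T g := by
      rw [harepr n hn, smul_pow, map_smul, smul_eq_mul]
      congr 1
      have e1 : (∑ i ∈ range n, y i) ^ N = ∏ _j : Fin N, (∑ i ∈ range n, y i) := by
        rw [Finset.prod_const, Finset.card_univ, Fintype.card_fin]
      rw [e1, Finset.prod_univ_sum, map_sum]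
    have hfact : ∀ g : Fin N → ℕ, T g = ∏ i ∈ univ.image g, ω (y 0 ^ mult g i) := by
      intro g
      calc T g = ω (∏ j, y (g j)) := by rw [hT]
        _ = ω (∏ i ∈ univ.image g, y i ^ mult g i) := by rw [Finset.prod_comp y g]
        _ = ∏ i ∈ univ.image g, ω (y i ^ mult g i) := hyset _ _
        _ = ∏ i ∈ univ.image g, ω (y 0 ^ mult g i) :=
            Finset.prod_congr rfl fun i _ => hidy i (mult g i)
    have hsum_mult : ∀ g : Fin N → ℕ, ∑ i ∈ univ.image g, mult g i = N := by
      intro g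
      have h := Finset.card_eq_sum_card_fiberwise
        (f := g) (s := (univ : Finset (Fin N))) (t := univ.image g)
        (fun j hj => Finset.mem_image_of_mem g hj)
      simp only [Finset.card_univ, Fintype.card_fin] at h
      exact h.symm
    haveI : DecidablePred fun g : Fin N → ℕ => ∀ i ∈ (univ : Finset (Fin N)).image g, 2 ≤ mult g i :=
      fun g => Finset.decidableDforallFinset
    set S := P.filter (fun g => ∀ i ∈ univ.image g, 2 ≤ mult g i) with hS
    have hT0 : ∀ g ∈ P, g ∉ S → T g = 0 := by
      intro g hgP hgS
      have hgS2 : ¬ (g ∈ P ∧ ∀ i ∈ univ.image g, 2 ≤ mult g i) := fun hcon =>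
        hgS (by rw [hS]; exact Finset.mem_filter.mpr hcon)
      push_neg at hgS2
      obtain ⟨i, hi, hlt⟩ := hgS2 hgP
      have h1 : 1 ≤ mult g i := by
        obtain ⟨j, _, rfl⟩ := Finset.mem_image.mp hi
        exact Finset.card_pos.mpr ⟨j, Finset.mem_filter.mpr ⟨Finset.mem_univ _, rfl⟩⟩
      have h2 : mult g i = 1 := by omega
      rw [hfact g]
      refine Finset.prod_eq_zero hi ?_
      rw [h2, pow_one, hy1]
    have hTbound : ∀ g : Fin N → ℕ, ‖T g‖ ≤ B ^ N := by
      intro g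
      rw [hfact g, norm_prod]
      calc ∏ i ∈ univ.image g, ‖ω (y 0 ^ mult g i)‖
          ≤ ∏ _i ∈ univ.image g, B := by
            refine Finset.prod_le_prod (fun _ _ => norm_nonneg _) (fun i _ => ?_)
            have hle : mult g i ≤ N := by
              refine le_trans (Finset.card_filter_le _ _) ?_
              simp
            have hs := Finset.single_le_sum (f := fun m => ‖ω (y 0 ^ m)‖)
              (fun m _ => norm_nonneg _) (Finset.mem_range.mpr (Nat.lt_succ_of_le hle))
            rw [hB]; linarith
        _ = B ^ (univ.image g).card := Finset.prod_const B
        _ ≤ B ^ N := pow_le_pow_right₀ hB1 (le_trans Finset.card_image_le (by simp))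
    have hcardim : ∀ g ∈ S, ((univ : Finset (Fin N)).image g).card ≤ k := by
      intro g hg
      rw [hS] at hg
      replace hg := Finset.mem_filter.mp hg
      have h2 : 2 * ((univ : Finset (Fin N)).image g).card ≤ N := by
        calc 2 * ((univ : Finset (Fin N)).image g).card = ∑ _i ∈ univ.image g, 2 := by
              rw [Finset.sum_const, smul_eq_mul, mul_comm]
          _ ≤ ∑ i ∈ univ.image g, mult g i := Finset.sum_le_sum (fun i hi => hg.2 i hi)
          _ = N := hsum_mult g
      omega
    have hScard : S.card ≤ k ^ N * n ^ k := by
      set Φ : (Fin N → ℕ) → (Fin N → Fin k) × (Fin k → ℕ) := fun g =>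
        (fun j => ⟨(((univ : Finset (Fin N)).image g).sort (· ≤ ·)).idxOf (g j) % k,
            Nat.mod_lt _ hk⟩,
         fun j => (((univ : Finset (Fin N)).image g).sort (· ≤ ·)).getD j 0) with hΦ
      have hrec : ∀ g ∈ S, ∀ j, (Φ g).2 ((Φ g).1 j) = g j := by
        intro g hg j
        have hmem : g j ∈ (univ : Finset (Fin N)).image g :=
          Finset.mem_image_of_mem g (Finset.mem_univ j)
        have hmemsort : g j ∈ (((univ : Finset (Fin N)).image g).sort (· ≤ ·)) :=
          (Finset.mem_sort _).mpr hmem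
        have hidx : (((univ : Finset (Fin N)).image g).sort (· ≤ ·)).idxOf (g j)
            < (((univ : Finset (Fin N)).image g).sort (· ≤ ·)).length :=
          List.idxOf_lt_length_iff.mpr hmemsort
        have hlen : (((univ : Finset (Fin N)).image g).sort (· ≤ ·)).length
            = ((univ : Finset (Fin N)).image g).card := Finset.length_sort _
        have hidxk : (((univ : Finset (Fin N)).image g).sort (· ≤ ·)).idxOf (g j) < k :=
          lt_of_lt_of_le (by rw [← hlen]; exact hidx) (hcardim g hg)
        rw [hΦ]
        simp only
        rw [Nat.mod_eq_of_lt hidxk, List.getD_eq_getElem _ _ hidx]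
        exact List.getElem_idxOf hidx
      have hmapsto : ∀ g ∈ S, Φ g ∈
          (Fintype.piFinset fun _ : Fin N => (univ : Finset (Fin k))) ×ˢ
            (Fintype.piFinset fun _ : Fin k => range n) := by
        intro g hg
        rw [Finset.mem_product]
        constructor
        · simp [Fintype.mem_piFinset]
        · rw [Fintype.mem_piFinset]
          intro j
          rw [hΦ]
          simp only
          by_cases hj : (j : ℕ) < (((univ : Finset (Fin N)).image g).sort (· ≤ ·)).length
          · rw [List.getD_eq_getElem _ _ hj]
            have hmem2 : (((univ : Finset (Fin N)).image g).sort (· ≤ ·))[(j : ℕ)]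
                ∈ (((univ : Finset (Fin N)).image g).sort (· ≤ ·)) := List.getElem_mem _
            have hmem3 := (Finset.mem_sort (α := ℕ) (· ≤ ·)).mp hmem2
            obtain ⟨j', _, hj'⟩ := Finset.mem_image.mp hmem3
            have hgP : g ∈ P := by
              rw [hS] at hg
              exact (Finset.mem_filter.mp hg).1
            have := (Fintype.mem_piFinset.mp hgP) j'
            rw [← hj']
            exact this
          · rw [List.getD_eq_default _ _ (le_of_not_gt hj)]
            exact Finset.mem_range.mpr (by omega)
      have hinj : Set.InjOn Φ S := by
        intro g1 h1 g2 h2 he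
        funext j
        have e1 := hrec g1 h1 j
        have e2 := hrec g2 h2 j
        rw [← e1, ← e2, he]
      calc S.card ≤ ((Fintype.piFinset fun _ : Fin N => (univ : Finset (Fin k))) ×ˢ
            (Fintype.piFinset fun _ : Fin k => range n)).card :=
            Finset.card_le_card_of_injOn Φ hmapsto hinj
        _ = k ^ N * n ^ k := by
            rw [Finset.card_product, Fintype.card_piFinset, Fintype.card_piFinset]
            simp
    have hnormsum : ‖∑ g ∈ P, T g‖ ≤ (S.card : ℝ) * B ^ N := by
      have e1 : ∑ g ∈ P, T g = ∑ g ∈ S, T g := by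
        symm
        exact Finset.sum_subset (Finset.filter_subset _ _) (fun g hgP hgS => hT0 g hgP hgS)
      rw [e1]
      calc ‖∑ g ∈ S, T g‖ ≤ ∑ g ∈ S, ‖T g‖ := norm_sum_le _ _
        _ ≤ (S.card : ℝ) * B ^ N := by
            have := Finset.sum_le_card_nsmul S (fun g => ‖T g‖) (B ^ N) (fun g _ => hTbound g)
            simpa [nsmul_eq_mul] using this
    have hnormc : ‖((n : ℂ)⁻¹) ^ N‖ = ((n : ℝ)⁻¹) ^ N := by
      rw [norm_pow, norm_inv, Complex.norm_natCast]
    have hBpos : (0 : ℝ) < B := lt_of_lt_of_le one_pos hB1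
    calc ‖ω (a n ^ N)‖ = ‖((n : ℂ)⁻¹) ^ N‖ * ‖∑ g ∈ P, T g‖ := by rw [hrepr, norm_mul]
      _ ≤ ((n : ℝ)⁻¹) ^ N * ((S.card : ℝ) * B ^ N) := by
          rw [hnormc]
          exact mul_le_mul_of_nonneg_left hnormsum (by positivity)
      _ ≤ ((n : ℝ)⁻¹) ^ N * (((k : ℝ) ^ N * (n : ℝ) ^ k) * B ^ N) := by
          refine mul_le_mul_of_nonneg_left ?_ (by positivity)
          refine mul_le_mul_of_nonneg_right ?_ (by positivity)
          exact_mod_cast hScard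
      _ = ((k : ℝ) ^ N * B ^ N) * ((n : ℝ)⁻¹) ^ k := by
          have hnne : ((n : ℝ)) ≠ 0 := ne_of_gt hnR0
          have e3 : ((n : ℝ)⁻¹) ^ k * (n : ℝ) ^ k = 1 := by
            rw [← mul_pow, inv_mul_cancel₀ hnne, one_pow]
          calc ((n : ℝ)⁻¹) ^ N * (((k : ℝ) ^ N * (n : ℝ) ^ k) * B ^ N)
              = ((k : ℝ) ^ N * B ^ N) * ((n : ℝ)⁻¹) ^ k * (((n : ℝ)⁻¹) ^ k * (n : ℝ) ^ k) := by
                rw [hN, two_mul, pow_add]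
                ring
            _ = ((k : ℝ) ^ N * B ^ N) * ((n : ℝ)⁻¹) ^ k := by rw [e3, mul_one]
  -- conclude
  have hGlim : Tendsto (fun n => ω (a n ^ N)) atTop (nhds 0) := by
    apply squeeze_zero_norm'
    · filter_upwards [eventually_ge_atTop 1] with n hn using hmain n hn
    · have h1 : Tendsto (fun n : ℕ => ((n : ℝ))⁻¹) atTop (nhds 0) :=
        tendsto_inv_atTop_nhds_zero_nat
      have h2 := h1.pow k
      rw [zero_pow hk.ne'] at h2
      simpa using h2.const_mul ((k : ℝ) ^ N * B ^ N)
  have hF : ∀ n : ℕ, ‖ω (CFC.sqrt (a n ^ 2) ^ k)‖ ≤ Real.sqrt ‖ω (a n ^ N)‖ := by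
    intro n
    rw [hN]
    exact wlln_sqrt_bound ω hω1 hωpos (hasa n) k
  show Tendsto (fun n : ℕ => ω (CFC.sqrt (a n ^ 2) ^ k)) atTop (nhds 0)
  apply squeeze_zero_norm hF
  have h3 : Tendsto (fun n => ‖ω (a n ^ N)‖) atTop (nhds 0) := by
    simpa using hGlim.norm
  have h4 := (Real.continuous_sqrt.tendsto 0).comp h3
  simpa [Function.comp_def] using h4
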